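/- Kreweras numbers count Dyck paths by horizontal run type: for a partition λ of n, the number of Dyck paths of size n whose multiset of lengths of maximal consecutive runs of East steps equals the multiset of parts of λ is Krew(λ) = (1/(n+1)) · C(n+1; n+1-ℓ(λ), m_1(λ), ..., m_n(λ)), where m_j(λ) is the multiplicity of j in λ. -/

import Mathlib

/-- A Dyck word of size `n`, encoded as a list of steps read from `(0,0)`
(`true` = North, `false` = East): it has length `2n`, exactly `n` North steps,
and every prefix has at least as many North steps as East steps
(the path stays weakly above the diagonal `y = x`). -/
def IsDyckWord (n : ℕ) (w : List Bool) : Prop :=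
  w.length = 2 * n ∧ w.count true = n ∧
    ∀ i, (w.take i).count false ≤ (w.take i).count true

/-- The composition `α(π)` of lengths of maximal runs of consecutive East steps of a path. -/
def eRuns (w : List Bool) : List ℕ :=
  (((w.splitOnP (fun b => b)).map List.length).filter (fun x => x ≠ 0))

open scoped Nat

/-- encode run lengths (after each North step) into a word -/
def toWord : List ℕ → List Bool
  | [] => []
  | a :: l => true :: (List.replicate a false ++ toWord l)

lemma toWord_append (l₁ l₂ : List ℕ) : toWord (l₁ ++ l₂) = toWord l₁ ++ toWord l₂ := by
  induction l₁ with
  | nil => rfl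
  | cons a l ih => simp [toWord, ih]

lemma toWord_count_true (l : List ℕ) : (toWord l).count true = l.length := by
  induction l with
  | nil => rfl
  | cons a l ih =>
    simp [toWord, List.count_cons, List.count_append, ih, List.count_replicate]

lemma toWord_count_false (l : List ℕ) : (toWord l).count false = l.sum := by
  induction l with
  | nil => rfl
  | cons a l ih =>
    simp [toWord, List.count_cons, List.count_append, ih, List.count_replicate]

lemma toWord_length (l : List ℕ) : (toWord l).length = l.length + l.sum := by
  induction l with
  | nil => rfl
  | cons a l ih => simp [toWord, ih]; omega

lemma splitOnP_toWord (l : List ℕ) :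
    (toWord l).splitOnP (fun b => b) = [] :: l.map (fun a => List.replicate a false) := by
  induction l with
  | nil => simp [toWord, List.splitOnP_nil]
  | cons a l ih =>
    show (true :: (List.replicate a false ++ toWord l)).splitOnP (fun b => b) = _
    rw [List.splitOnP_cons]
    simp only [if_pos rfl]
    have key : ∀ m : ℕ, (List.replicate m false ++ toWord l).splitOnP (fun b => b)
        = List.modifyHead (fun t => List.replicate m false ++ t) ((toWord l).splitOnP (fun b => b)) := by
      intro m
      induction m with
      | zero =>
        rcases h : (toWord l).splitOnP (fun b => b) with _ | ⟨hd, tl⟩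
        · exact absurd h (List.splitOnP_ne_nil _ _)
        · simpa using h
      | succ k ihk =>
        rw [List.replicate_succ, List.cons_append, List.splitOnP_cons]
        simp only [Bool.false_eq_true, if_false]
        rw [ihk]
        rcases h : (toWord l).splitOnP (fun b => b) with _ | ⟨hd, tl⟩
        · exact absurd h (List.splitOnP_ne_nil _ _)
        · simp [List.replicate_succ]
    rw [key, ih]
    simp [List.map_cons]

lemma eRuns_toWord (l : List ℕ) : eRuns (toWord l) = l.filter (fun x => x ≠ 0) := by
  unfold eRuns
  rw [splitOnP_toWord]
  have h1 : (List.length ∘ fun a : ℕ => List.replicate a false) = fun a => a :=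
    funext (by simp)
  simp [h1]

/-- the slack-generalized sufficiency lemma -/
lemma dyck_prefix_of (c : List ℕ) : ∀ s, (∀ k, (c.take k).sum ≤ k + s) →
    ∀ i, ((toWord c).take i).count false ≤ ((toWord c).take i).count true + s := by
  induction c with
  | nil => intro s _ i; simp [toWord]
  | cons a l ih =>
    intro s H i
    have ha : a ≤ 1 + s := by simpa using H 1
    match i with
    | 0 => simp
    | j + 1 =>
      have hw : toWord (a :: l) = true :: (List.replicate a false ++ toWord l) := rfl
      rw [hw, List.take_succ_cons]
      simp only [List.count_cons]
      rcases le_or_gt j a with hj | hj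
      · rw [List.take_append_of_le_length (by simpa using hj),
          List.take_replicate, min_eq_left (by simpa using hj)]
        simp only [List.count_replicate]
        simp
        omega
      · have hIH := ih (s + 1 - a) (by
          intro k
          have := H (k + 1)
          simp only [List.take_succ_cons, List.sum_cons] at this
          omega) (j - a)
        have hsplit := List.take_length_add_append (l₁ := List.replicate a false) (l₂ := toWord l) (j - a)
        simp only [List.length_replicate] at hsplit
        have hj' : j = a + (j - a) := by omega
        rw [hj', hsplit, List.count_append, List.count_append]
        simp only [List.count_replicate]
        simp
        omega

lemma sum_take_le_of_dyck (c : List ℕ) (h : ∀ i, ((toWord c).take i).count false ≤ ((toWord c).take i).count true) :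
    ∀ k, (c.take k).sum ≤ k := by
  intro k
  rcases le_or_gt c.length k with hk | hk
  · have := h (toWord c).length
    rw [List.take_length, toWord_count_false, toWord_count_true] at this
    have hcs : c.sum = (c.take k).sum + (c.drop k).sum := by
      rw [← List.sum_append, List.take_append_drop]
    omega
  · have hsplit : toWord c = toWord (c.take k) ++ toWord (c.drop k) := by
      rw [← toWord_append, List.take_append_drop]
    have := h ((toWord (c.take k)).length)
    rw [hsplit, List.take_append_of_le_length le_rfl, List.take_length,
      toWord_count_false, toWord_count_true] at this
    simpa [List.length_take, min_eq_left hk.le] using this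

lemma isDyckWord_toWord_iff (n : ℕ) (c : List ℕ) :
    IsDyckWord n (toWord c) ↔ c.length = n ∧ c.sum = n ∧ ∀ k, (c.take k).sum ≤ k := by
  constructor
  · rintro ⟨hlen, htrue, hpre⟩
    have h1 : c.length = n := by rw [← toWord_count_true c, htrue]
    have h2 : c.sum = n := by
      have := toWord_length c
      omega
    exact ⟨h1, h2, sum_take_le_of_dyck c hpre⟩
  · rintro ⟨h1, h2, h3⟩
    refine ⟨by rw [toWord_length, h1, h2]; ring, by rw [toWord_count_true, h1], ?_⟩
    intro i
    simpa using dyck_prefix_of c 0 (by simpa using h3) i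

lemma takeWhile_toWord (l : List ℕ) : (toWord l).takeWhile (fun b => !b) = [] := by
  cases l with
  | nil => rfl
  | cons a l => simp [toWord, List.takeWhile_cons]

lemma takeWhile_replicate_toWord (a : ℕ) (l : List ℕ) :
    (List.replicate a false ++ toWord l).takeWhile (fun b => !b) = List.replicate a false := by
  induction a with
  | zero => simpa using takeWhile_toWord l
  | succ k ih => simpa [List.replicate_succ, List.takeWhile_cons] using ih

lemma toWord_injective : Function.Injective toWord := by
  intro l₁ l₂ h
  induction l₁ generalizing l₂ with
  | nil =>
    cases l₂ with
    | nil => rfl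
    | cons a l => exact absurd h (by simp [toWord])
  | cons a l ih =>
    cases l₂ with
    | nil => exact absurd h (by simp [toWord])
    | cons a' l' =>
      simp only [toWord, List.cons.injEq, true_and] at h
      have ha : a = a' := by
        have := congrArg (fun w => (List.takeWhile (fun b : Bool => !b) w).length) h
        simpa [takeWhile_replicate_toWord, takeWhile_toWord] using this
      subst ha
      have := List.append_cancel_left h
      rw [ih this]

lemma exists_toWord : ∀ N (w : List Bool), w.length ≤ N →
    (∀ x ∈ w.take 1, x = true) → ∃ c, toWord c = w := by
  intro N
  induction N with
  | zero =>
    intro w hw _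
    have : w = [] := List.eq_nil_of_length_eq_zero (Nat.le_zero.mp hw)
    subst this
    exact ⟨[], rfl⟩
  | succ N ih =>
    intro w hw hhead
    cases w with
    | nil => exact ⟨[], rfl⟩
    | cons x v =>
      have hx : x = true := hhead x (by simp)
      subst hx
      set a := (v.takeWhile (fun b => !b)).length with ha
      have htw : v.takeWhile (fun b => !b) = List.replicate a false := by
        rw [List.eq_replicate_iff]
        refine ⟨rfl, fun b hb => ?_⟩
        have := List.mem_takeWhile_imp hb
        simpa using this
      have hlen : (v.dropWhile (fun b => !b)).length ≤ N := by
        have h2 : (v.takeWhile (fun b => !b)).length + (v.dropWhile (fun b => !b)).length = v.length := by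
          rw [← List.length_append, List.takeWhile_append_dropWhile]
        simp only [List.length_cons] at hw
        omega
      have hhead2 : ∀ x ∈ (v.dropWhile (fun b => !b)).take 1, x = true := by
        intro x hx
        have hmatch := List.head?_dropWhile_not (fun b : Bool => !b) v
        cases hd : (v.dropWhile (fun b => !b)) with
        | nil => simp [hd] at hx
        | cons y ys =>
          rw [hd] at hmatch
          simp only [List.head?_cons] at hmatch
          simp only [hd, List.take_succ_cons, List.take_zero, List.mem_singleton] at hx
          subst hx
          simpa using hmatch
      obtain ⟨c', hc'⟩ := ih _ hlen hhead2
      refine ⟨a :: c', ?_⟩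
      show true :: (List.replicate a false ++ toWord c') = true :: v
      rw [hc', ← htw, List.takeWhile_append_dropWhile]

def GoodSeq (a : List ℕ) : Prop := ∀ m, (a.take (m + 1)).sum ≤ m

section Cycle
variable {l : List ℕ} {n : ℕ}

private def P (l : List ℕ) (k : ℕ) : ℕ := ((l ++ l).take k).sum

lemma key_window (hl : l.length = n + 1) {r t : ℕ} (hr : r ≤ n + 1) (ht : t ≤ n + 1) :
    ((l.rotate r).take t).sum + P l r = P l (r + t) := by
  have hdrop : (l ++ l).drop r = l.drop r ++ l :=
    List.drop_append_of_le_length (by omega)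
  have hrot : l.rotate r = l.drop r ++ l.take r :=
    List.rotate_eq_drop_append_take (by omega)
  have htake : (l.rotate r).take t = ((l ++ l).drop r).take t := by
    rw [hdrop, hrot, List.take_append, List.take_append,
      List.take_take]
    congr 1
    have : min (t - (l.drop r).length) r = t - (l.drop r).length := by
      simp only [List.length_drop, hl]
      omega
    rw [this]
  have hadd : (l ++ l).take (r + t) = (l ++ l).take r ++ ((l ++ l).drop r).take t :=
    List.take_add
  unfold P
  rw [hadd, List.sum_append, htake]
  omega

lemma P_shift (hl : l.length = n + 1) (hs : l.sum = n) {k : ℕ} (hk : k ≤ n + 1) :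
    P l (n + 1 + k) = n + P l k := by
  unfold P
  have h1 : (l ++ l).take (n + 1 + k) = l ++ l.take k := by
    have := List.take_length_add_append (l₁ := l) (l₂ := l) k
    rw [hl] at this
    exact this
  have h2 : (l ++ l).take k = l.take k := List.take_append_of_le_length (by omega)
  rw [h1, h2, List.sum_append, hs]

lemma sum_rotate (r : ℕ) : (l.rotate r).sum = l.sum := (l.rotate_perm r).sum_eq

lemma goodSeq_rotate_iff (hl : l.length = n + 1) (hs : l.sum = n) {r : ℕ} (hr : r ≤ n + 1) :
    GoodSeq (l.rotate r) ↔ ∀ m ≤ n, P l (r + m + 1) ≤ P l r + m := by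
  constructor
  · intro hg m hm
    have hw := key_window hl hr (t := m + 1) (by omega)
    have hpe : r + (m + 1) = r + m + 1 := by omega
    rw [hpe] at hw
    have h2 := hg m
    omega
  · intro h m
    rcases le_or_gt m n with hm | hm
    · have hw := key_window hl hr (t := m + 1) (by omega)
      have hpe : r + (m + 1) = r + m + 1 := by omega
      rw [hpe] at hw
      have h2 := h m hm
      omega
    · have hlen : (l.rotate r).length = n + 1 := by rw [List.length_rotate, hl]
      have : (l.rotate r).take (m + 1) = l.rotate r := List.take_of_length_le (by omega)
      rw [this, sum_rotate, hs]
      omega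

private def g (l : List ℕ) (k : ℕ) : ℤ := (P l k : ℤ) - k

lemma g_shift (hl : l.length = n + 1) (hs : l.sum = n) {k : ℕ} (hk : k ≤ n + 1) :
    g l (n + 1 + k) = g l k - 1 := by
  unfold g
  rw [P_shift hl hs hk]
  push_cast
  ring

lemma goodSeq_rotate_iff' (hl : l.length = n + 1) (hs : l.sum = n) {r : ℕ} (hr : r ≤ n + 1) :
    GoodSeq (l.rotate r) ↔ ∀ m ≤ n, g l (r + m + 1) < g l r := by
  rw [goodSeq_rotate_iff hl hs hr]
  apply forall_congr'
  intro m
  apply imp_congr Iff.rfl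
  unfold g
  constructor <;> intro h <;> [push_cast; skip] <;> omega

theorem cycle_exists_unique (hl : l.length = n + 1) (hs : l.sum = n) :
    ∃! r : ℕ, r < n + 1 ∧ GoodSeq (l.rotate r) := by
  classical
  -- the set of maximizers of g on range (n+1)
  set F : Finset ℕ := (Finset.range (n + 1)).filter
    (fun j => ∀ i ∈ Finset.range (n + 1), g l i ≤ g l j) with hF
  obtain ⟨b, hb, hbmax⟩ := Finset.exists_max_image (Finset.range (n + 1)) (g l)
    ⟨0, by simp⟩
  have hFne : F.Nonempty := ⟨b, by simp only [hF, Finset.mem_filter]; exact ⟨hb, hbmax⟩⟩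
  obtain ⟨r, hrF, hrtop⟩ : ∃ r, r ∈ F ∧ ∀ x ∈ F, x ≤ r :=
    ⟨F.max' hFne, F.max'_mem hFne, fun x hx => F.le_max' x hx⟩
  simp only [hF, Finset.mem_filter, Finset.mem_range] at hrF
  obtain ⟨hrn, hrmax⟩ := hrF
  have hgood : ∀ m ≤ n, g l (r + m + 1) < g l r := by
    intro m hm
    rcases le_or_gt (r + m + 1) n with hj | hj
    · have hjm : r + m + 1 < n + 1 := by omega
      rcases lt_or_eq_of_le (hrmax (r + m + 1) hjm) with h | h
      · exact h
      · exfalso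
        have hmem : (r + m + 1) ∈ F := by
          simp only [hF, Finset.mem_filter, Finset.mem_range]
          refine ⟨by omega, fun i hi => le_trans (hrmax i hi) (le_of_eq h.symm)⟩
        have := hrtop _ hmem
        omega
    · have hk : r + m + 1 = n + 1 + (r + m - n) := by omega
      rw [hk, g_shift hl hs (by omega)]
      have hd : r + m - n < n + 1 := by omega
      have := hrmax (r + m - n) hd
      omega
  refine ⟨r, ⟨by omega, (goodSeq_rotate_iff' hl hs (by omega)).mpr hgood⟩, ?_⟩
  rintro r' ⟨hr'n, hgood'⟩
  by_contra hne
  have hgood'' := (goodSeq_rotate_iff' hl hs (le_of_lt hr'n)).mp hgood'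
  -- two distinct good indices lead to contradiction; wlog via cases
  rcases lt_or_gt_of_ne hne with hlt | hlt
  · -- r' < r
    have h1 : g l r < g l r' := by
      have := hgood'' (r - r' - 1) (by omega)
      have he : r' + (r - r' - 1) + 1 = r := by omega
      rwa [he] at this
    have h2 : g l (r' + n + 1) < g l r := by
      have := hgood (r' + n - r) (by omega)
      have he : r + (r' + n - r) + 1 = r' + n + 1 := by omega
      rwa [he] at this
    have h3 : g l (r' + n + 1) = g l r' - 1 := by
      have he : r' + n + 1 = n + 1 + r' := by omega
      rw [he]
      exact g_shift hl hs (by omega)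
    omega
  · -- r < r'
    have h1 : g l r' < g l r := by
      have := hgood (r' - r - 1) (by omega)
      have he : r + (r' - r - 1) + 1 = r' := by omega
      rwa [he] at this
    have h2 : g l (r + n + 1) < g l r' := by
      have := hgood'' (r + n - r') (by omega)
      have he : r' + (r + n - r') + 1 = r + n + 1 := by omega
      rwa [he] at this
    have h3 : g l (r + n + 1) = g l r - 1 := by
      have he : r + n + 1 = n + 1 + r := by omega
      rw [he]
      exact g_shift hl hs (by omega)
    omega

end Cycle

instance anagrams_finite (m : Multiset ℕ) : Finite {l : List ℕ // (l : Multiset ℕ) = m} := by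
  have : ∀ l : {l : List ℕ // (l : Multiset ℕ) = m}, l.1 ∈ m.toList.permutations := by
    rintro ⟨l, hl⟩
    rw [List.mem_permutations, ← Multiset.coe_eq_coe, hl, Multiset.coe_toList]
  have hf : Finite {x // x ∈ m.toList.permutations} := (m.toList.permutations.finite_toSet).to_subtype
  exact Finite.of_injective (fun l => (⟨l.1, this l⟩ : {x // x ∈ m.toList.permutations}))
    (fun a b h => by cases a; cases b; simpa [Subtype.ext_iff] using h)

lemma prod_count_erase {m : Multiset ℕ} {a : ℕ} (ha : a ∈ m) :
    ∏ x ∈ m.toFinset, (m.count x)! =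
      m.count a * ∏ x ∈ (m.erase a).toFinset, ((m.erase a).count x)! := by
  classical
  have haf : a ∈ m.toFinset := Multiset.mem_toFinset.mpr ha
  rw [← Finset.mul_prod_erase m.toFinset _ haf]
  have hcount : 1 ≤ m.count a := Multiset.one_le_count_iff_mem.mpr ha
  have h1 : (m.count a)! = m.count a * ((m.erase a).count a)! := by
    rw [Multiset.count_erase_self]
    rcases Nat.exists_eq_add_of_le hcount with ⟨k, hk⟩
    rw [hk, Nat.add_comm 1 k]
    simp [Nat.factorial_succ]
  have h2 : ∏ x ∈ m.toFinset.erase a, (m.count x)! =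
      ∏ x ∈ m.toFinset.erase a, ((m.erase a).count x)! := by
    apply Finset.prod_congr rfl
    intro x hx
    rw [Multiset.count_erase_of_ne (Finset.ne_of_mem_erase hx)]
  have hsub : (m.erase a).toFinset ⊆ m.toFinset := by
    intro x hx
    rw [Multiset.mem_toFinset] at hx ⊢
    exact Multiset.mem_of_mem_erase hx
  rw [h1, h2, mul_assoc,
    Finset.mul_prod_erase m.toFinset (fun x => ((m.erase a).count x)!) haf]
  congr 1
  symm
  apply Finset.prod_subset hsub
  intro x hx hnx
  have hz : (m.erase a).count x = 0 := by
    rw [Multiset.count_eq_zero]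
    intro hmem
    exact hnx (Multiset.mem_toFinset.mpr hmem)
  rw [hz]
  rfl

lemma anagrams_sigma (m : Multiset ℕ) (hm : m ≠ 0) :
    Nat.card {l : List ℕ // (l : Multiset ℕ) = m}
      = ∑ a ∈ m.toFinset, Nat.card {l : List ℕ // (l : Multiset ℕ) = m.erase a} := by
  classical
  have hbij : Function.Bijective
      (fun p : (a : {x // x ∈ m.toFinset}) × {l : List ℕ // (l : Multiset ℕ) = m.erase a.1} =>
        (⟨p.1.1 :: p.2.1, by
          rw [← Multiset.cons_coe, p.2.2, Multiset.cons_erase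
            (Multiset.mem_toFinset.mp p.1.2)]⟩ : {l : List ℕ // (l : Multiset ℕ) = m})) := by
    constructor
    · rintro ⟨⟨a, ha⟩, ⟨t, ht⟩⟩ ⟨⟨a', ha'⟩, ⟨t', ht'⟩⟩ h
      simp only [Subtype.mk.injEq, List.cons.injEq] at h
      obtain ⟨h1, h2⟩ := h
      subst h1
      subst h2
      rfl
    · rintro ⟨l, hl⟩
      cases l with
      | nil =>
        exfalso
        apply hm
        rw [← hl]
        rfl
      | cons x t =>
        have hx : x ∈ m := by
          rw [← hl, ← Multiset.cons_coe]
          exact Multiset.mem_cons_self x _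
        refine ⟨⟨⟨x, Multiset.mem_toFinset.mpr hx⟩, ⟨t, ?_⟩⟩, rfl⟩
        show (↑t : Multiset ℕ) = m.erase x
        rw [← hl, ← Multiset.cons_coe, Multiset.erase_cons_head]
  rw [← Nat.card_eq_of_bijective _ hbij]
  letI : ∀ a : {x // x ∈ m.toFinset}, Fintype {l : List ℕ // (l : Multiset ℕ) = m.erase a.1} :=
    fun a => Fintype.ofFinite _
  rw [Nat.card_eq_fintype_card, Fintype.card_sigma]
  rw [Finset.univ_eq_attach, ← Finset.sum_attach m.toFinset
    (fun a => Nat.card {l : List ℕ // (l : Multiset ℕ) = m.erase a})]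
  apply Finset.sum_congr rfl
  intro a _
  rw [Nat.card_eq_fintype_card]

theorem count_anagrams (m : Multiset ℕ) :
    Nat.card {l : List ℕ // (l : Multiset ℕ) = m} * ∏ x ∈ m.toFinset, (m.count x)!
      = (Multiset.card m)! := by
  classical
  induction m using Multiset.strongInductionOn with
  | ih m ih =>
    rcases eq_or_ne m 0 with rfl | hm
    · have h1 : Nat.card {l : List ℕ // (l : Multiset ℕ) = (0 : Multiset ℕ)} = 1 := by
        rw [Nat.card_eq_one_iff_unique]
        refine ⟨⟨?_⟩, ⟨⟨[], rfl⟩⟩⟩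
        rintro ⟨l, hl⟩ ⟨l', hl'⟩
        simp only [Multiset.coe_eq_zero] at hl hl'
        subst hl; subst hl'; rfl
      simp [h1]
    · rw [anagrams_sigma m hm, Finset.sum_mul]
      have hstep : ∀ a ∈ m.toFinset,
          Nat.card {l : List ℕ // (l : Multiset ℕ) = m.erase a} * ∏ x ∈ m.toFinset, (m.count x)!
            = m.count a * (Multiset.card m - 1)! := by
        intro a ha
        have ham : a ∈ m := Multiset.mem_toFinset.mp ha
        rw [prod_count_erase ham, ← mul_assoc, mul_comm _ (m.count a), mul_assoc,
          ih (m.erase a) (Multiset.erase_lt.mpr ham)]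
        congr 2
        rw [Multiset.card_erase_of_mem ham]
        rfl
      rw [Finset.sum_congr rfl hstep, ← Finset.sum_mul, Multiset.toFinset_sum_count_eq]
      have hpos : 0 < Multiset.card m := Multiset.card_pos.mpr hm
      rcases Nat.exists_eq_add_of_le hpos with ⟨k, hk⟩
      rw [hk]
      simp [Nat.factorial_succ, Nat.add_comm 1 k]


section Assembly

lemma multiset_card_le_sum (s : Multiset ℕ) (h : ∀ x ∈ s, x ≠ 0) :
    Multiset.card s ≤ s.sum := by
  induction s using Multiset.induction_on with
  | empty => simp
  | cons a s ih =>
    simp only [Multiset.card_cons, Multiset.sum_cons]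
    have ha : a ≠ 0 := h a (Multiset.mem_cons_self a s)
    have := ih (fun x hx => h x (Multiset.mem_cons_of_mem hx))
    omega

lemma filter_ne_sum (c : List ℕ) : (c.filter (fun x => x ≠ 0)).sum = c.sum := by
  induction c with
  | nil => rfl
  | cons a l ih =>
    rw [List.filter_cons]
    rcases eq_or_ne a 0 with rfl | ha
    · rw [if_neg (by simp)]
      simpa using ih
    · rw [if_pos (by simpa using ha)]
      simp only [List.sum_cons, ih]

variable {n : ℕ} (lam : Nat.Partition n)

/-- the number of Dyck words equals the number of "run lists" -/
lemma card_T0_eq_T1 :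
    Nat.card {w : List Bool // IsDyckWord n w ∧ Multiset.ofList (eRuns w) = lam.parts}
      = Nat.card {c : List ℕ // c.length = n ∧ (∀ k, (c.take k).sum ≤ k) ∧
          Multiset.ofList (c.filter (fun x => x ≠ 0)) = lam.parts} := by
  symm
  apply Nat.card_eq_of_bijective
    (f := fun c => ⟨toWord c.1, by
      obtain ⟨c, hlen, hpre, hfil⟩ := c
      have hsum : c.sum = n := by
        rw [← filter_ne_sum c, ← Multiset.sum_coe, hfil, lam.parts_sum]
      refine ⟨(isDyckWord_toWord_iff n c).mpr ⟨hlen, hsum, hpre⟩, ?_⟩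
      rw [eRuns_toWord, hfil]⟩)
  constructor
  · rintro ⟨c, hc⟩ ⟨c', hc'⟩ h
    simp only [Subtype.mk.injEq] at h
    exact Subtype.ext (toWord_injective h)
  · rintro ⟨w, hdw, hruns⟩
    have hhead : ∀ x ∈ w.take 1, x = true := by
      intro x hx
      cases w with
      | nil => simp at hx
      | cons y v =>
        simp only [List.take_succ_cons, List.take_zero, List.mem_singleton] at hx
        subst hx
        have := hdw.2.2 1
        cases x
        · simp at this
        · rfl
    obtain ⟨c, hc⟩ := exists_toWord w.length w le_rfl hhead
    subst hc
    obtain ⟨hlen, hsum, hpre⟩ := (isDyckWord_toWord_iff n c).mp hdw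
    rw [eRuns_toWord] at hruns
    exact ⟨⟨c, hlen, hpre, hruns⟩, rfl⟩

lemma card_T1_eq_T2 :
    Nat.card {c : List ℕ // c.length = n ∧ (∀ k, (c.take k).sum ≤ k) ∧
          Multiset.ofList (c.filter (fun x => x ≠ 0)) = lam.parts}
      = Nat.card {a : List ℕ // a.length = n + 1 ∧ GoodSeq a ∧
          Multiset.ofList (a.filter (fun x => x ≠ 0)) = lam.parts} := by
  apply Nat.card_eq_of_bijective
    (f := fun c => ⟨0 :: c.1, by
      obtain ⟨c, hlen, hpre, hfil⟩ := c
      refine ⟨by simp [hlen], ?_, by simpa [List.filter_cons] using hfil⟩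
      intro m
      simpa [List.take_succ_cons] using hpre m⟩)
  constructor
  · rintro ⟨c, hc⟩ ⟨c', hc'⟩ h
    simp only [Subtype.mk.injEq, List.cons.injEq, true_and] at h
    exact Subtype.ext h
  · rintro ⟨a, hlen, hgood, hfil⟩
    cases a with
    | nil => simp at hlen
    | cons b t =>
      have hb : b = 0 := by
        have := hgood 0
        simpa using this
      subst hb
      refine ⟨⟨t, by simpa using hlen, ?_, by simpa [List.filter_cons] using hfil⟩, rfl⟩
      intro k
      simpa [List.take_succ_cons] using hgood k

end Assembly

section Rotation

variable {n : ℕ} (lam : Nat.Partition n)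

lemma sum_of_filter_parts {a : List ℕ}
    (hfil : Multiset.ofList (a.filter (fun x => x ≠ 0)) = lam.parts) : a.sum = n := by
  rw [← filter_ne_sum a, ← Multiset.sum_coe, hfil, lam.parts_sum]

lemma rotate_filter_coe (a : List ℕ) (r : ℕ) :
    Multiset.ofList ((a.rotate r).filter (fun x => x ≠ 0))
      = Multiset.ofList (a.filter (fun x => x ≠ 0)) :=
  Multiset.coe_eq_coe.mpr ((a.rotate_perm r).filter _)

lemma rotate_back {g : List ℕ} {N : ℕ} (hg : g.length = N + 1) {r : ℕ} (hr : r < N + 1) :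
    (g.rotate r).rotate ((N + 1 - r) % (N + 1)) = g := by
  have hlen : (g.rotate r).length = N + 1 := by rw [List.length_rotate, hg]
  have h1 : (N + 1 - r) % (N + 1) = (N + 1 - r) % (g.rotate r).length := by rw [hlen]
  rw [h1, List.rotate_mod, List.rotate_rotate, (by omega : r + (N + 1 - r) = N + 1), ← hg,
    List.rotate_length]

lemma mod_sub_inj {N r1 r2 : ℕ} (h1 : r1 < N + 1) (h2 : r2 < N + 1)
    (h : (N + 1 - r1) % (N + 1) = (N + 1 - r2) % (N + 1)) : r1 = r2 := by
  have e : ∀ r : ℕ, r < N + 1 → (N + 1 - r) % (N + 1) = if r = 0 then 0 else N + 1 - r := by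
    intro r hr
    rcases eq_or_ne r 0 with rfl | hr0
    · simp [Nat.mod_self]
    · rw [if_neg hr0, Nat.mod_eq_of_lt (by omega)]
  rw [e r1 h1, e r2 h2] at h
  split_ifs at h <;> omega

lemma card_S_eq :
    Nat.card {a : List ℕ // a.length = n + 1 ∧
        Multiset.ofList (a.filter (fun x => x ≠ 0)) = lam.parts}
      = Nat.card {a : List ℕ // a.length = n + 1 ∧ GoodSeq a ∧
          Multiset.ofList (a.filter (fun x => x ≠ 0)) = lam.parts} * (n + 1) := by
  have hcard : Nat.card ({a : List ℕ // a.length = n + 1 ∧ GoodSeq a ∧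
          Multiset.ofList (a.filter (fun x => x ≠ 0)) = lam.parts} × Fin (n + 1))
      = Nat.card {a : List ℕ // a.length = n + 1 ∧ GoodSeq a ∧
          Multiset.ofList (a.filter (fun x => x ≠ 0)) = lam.parts} * (n + 1) := by
    rw [Nat.card_prod]
    simp
  rw [← hcard]
  symm
  apply Nat.card_eq_of_bijective
    (f := fun p => ⟨p.1.1.rotate p.2.1, by
      obtain ⟨⟨g, hg1, _, hg3⟩, r⟩ := p
      exact ⟨by rw [List.length_rotate, hg1], by rw [rotate_filter_coe]; exact hg3⟩⟩)
  constructor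
  · rintro ⟨⟨g1, hg1len, hg1good, hg1fil⟩, r1⟩ ⟨⟨g2, hg2len, hg2good, hg2fil⟩, r2⟩ hpq
    simp only [Subtype.mk.injEq] at hpq
    set h := g1.rotate r1.1 with hh
    have hh2 : h = g2.rotate r2.1 := hpq
    have hhlen : h.length = n + 1 := by rw [hh, List.length_rotate, hg1len]
    have hhsum : h.sum = n := by
      rw [hh, sum_rotate]
      exact sum_of_filter_parts lam hg1fil
    obtain ⟨r, hr, hruniq⟩ := cycle_exists_unique hhlen hhsum
    have hb1 : h.rotate ((n + 1 - r1.1) % (n + 1)) = g1 := by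
      rw [hh]; exact rotate_back hg1len r1.2
    have hb2 : h.rotate ((n + 1 - r2.1) % (n + 1)) = g2 := by
      rw [hh2]; exact rotate_back hg2len r2.2
    have hu1 : (n + 1 - r1.1) % (n + 1) = r := by
      apply hruniq
      refine ⟨Nat.mod_lt _ (by omega), ?_⟩
      rw [hb1]; exact hg1good
    have hu2 : (n + 1 - r2.1) % (n + 1) = r := by
      apply hruniq
      refine ⟨Nat.mod_lt _ (by omega), ?_⟩
      rw [hb2]; exact hg2good
    have hr12 : r1 = r2 := Fin.ext (mod_sub_inj r1.2 r2.2 (hu1.trans hu2.symm))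
    have hg12 : g1 = g2 := by rw [← hb1, ← hb2, hu1, hu2]
    subst hr12
    simp only [Prod.mk.injEq, Subtype.mk.injEq]
    exact ⟨hg12, trivial⟩
  · rintro ⟨a, halen, hafil⟩
    have hasum : a.sum = n := sum_of_filter_parts lam hafil
    obtain ⟨r, ⟨hrlt, hrgood⟩, -⟩ := cycle_exists_unique halen hasum
    refine ⟨⟨⟨a.rotate r, by rw [List.length_rotate, halen], hrgood,
      by rw [rotate_filter_coe]; exact hafil⟩,
      ⟨(n + 1 - r) % (n + 1), Nat.mod_lt _ (by omega)⟩⟩, ?_⟩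
    simp only [Subtype.mk.injEq]
    exact rotate_back halen hrlt

end Rotation

section Final

variable {n : ℕ} (lam : Nat.Partition n)

lemma parts_card_le : Multiset.card lam.parts ≤ n := by
  have := multiset_card_le_sum lam.parts (fun x hx => (lam.parts_pos hx).ne')
  rwa [lam.parts_sum] at this

def Mm : Multiset ℕ := lam.parts + Multiset.replicate (n + 1 - Multiset.card lam.parts) 0

lemma zero_not_mem_parts : 0 ∉ lam.parts := fun h => (lam.parts_pos h).ne rfl

lemma mem_S_iff (a : List ℕ) :
    (a.length = n + 1 ∧ Multiset.ofList (a.filter (fun x => x ≠ 0)) = lam.parts)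
      ↔ (↑a : Multiset ℕ) = Mm lam := by
  have hℓ := parts_card_le lam
  constructor
  · rintro ⟨hlen, hfil⟩
    have hsplit := Multiset.filter_add_not (fun x => x ≠ 0) (↑a : Multiset ℕ)
    have hf1 : Multiset.filter (fun x => x ≠ 0) (↑a : Multiset ℕ) = lam.parts := by
      rw [Multiset.filter_coe]
      exact hfil
    have hf2 : Multiset.filter (fun x => ¬ x ≠ 0) (↑a : Multiset ℕ)
        = Multiset.replicate (n + 1 - Multiset.card lam.parts) 0 := by
      rw [Multiset.eq_replicate]
      constructor
      · have hcards : Multiset.card (Multiset.filter (fun x => x ≠ 0) (↑a : Multiset ℕ))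
            + Multiset.card (Multiset.filter (fun x => ¬ x ≠ 0) (↑a : Multiset ℕ))
            = n + 1 := by
          rw [← Multiset.card_add, hsplit, Multiset.coe_card, hlen]
        rw [hf1] at hcards
        omega
      · intro b hb
        have := Multiset.of_mem_filter hb
        simpa using this
    rw [← hsplit, hf1, hf2]
    rfl
  · intro h
    constructor
    · rw [← Multiset.coe_card, h]
      unfold Mm
      rw [Multiset.card_add, Multiset.card_replicate]
      omega
    · have hfe : Multiset.filter (fun x => x ≠ 0) (↑a : Multiset ℕ) = lam.parts := by
        rw [h]
        unfold Mm
        rw [Multiset.filter_add]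
        have h1 : Multiset.filter (fun x => x ≠ 0) lam.parts = lam.parts :=
          Multiset.filter_eq_self.mpr (fun x hx => (lam.parts_pos hx).ne')
        have h2 : Multiset.filter (fun x => x ≠ 0)
            (Multiset.replicate (n + 1 - Multiset.card lam.parts) 0) = 0 := by
          rw [Multiset.filter_eq_nil]
          intro x hx
          rw [Multiset.eq_of_mem_replicate hx]
          simp
        rw [h1, h2, add_zero]
      rw [← hfe, Multiset.filter_coe]

lemma Mm_card : Multiset.card (Mm lam) = n + 1 := by
  have hℓ := parts_card_le lam
  unfold Mm
  rw [Multiset.card_add, Multiset.card_replicate]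
  omega

lemma Mm_count_zero : (Mm lam).count 0 = n + 1 - Multiset.card lam.parts := by
  unfold Mm
  rw [Multiset.count_add, Multiset.count_replicate, if_pos rfl,
    Multiset.count_eq_zero.mpr (zero_not_mem_parts lam)]
  omega

lemma Mm_count_ne {x : ℕ} (hx : x ≠ 0) : (Mm lam).count x = lam.parts.count x := by
  unfold Mm
  rw [Multiset.count_add, Multiset.count_replicate, if_neg (fun h => hx h.symm)]
  omega

lemma Mm_toFinset : (Mm lam).toFinset = insert 0 lam.parts.toFinset := by
  have hℓ := parts_card_le lam
  unfold Mm
  rw [Multiset.toFinset_add, Multiset.toFinset_replicate, if_neg (by omega),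
    Finset.union_comm, ← Finset.insert_eq]

lemma parts_le_n {x : ℕ} (hx : x ∈ lam.parts) : x ≤ n := by
  have := Multiset.single_le_sum (fun y _ => Nat.zero_le y) x hx
  rwa [lam.parts_sum] at this

lemma parts_toFinset_subset :
    lam.parts.toFinset ⊆ Finset.image (fun j : Fin n => (j : ℕ) + 1) Finset.univ := by
  intro x hx
  have hxm : x ∈ lam.parts := Multiset.mem_toFinset.mp hx
  have h1 : 0 < x := lam.parts_pos hxm
  have h2 : x ≤ n := parts_le_n lam hxm
  refine Finset.mem_image.mpr ⟨⟨x - 1, by omega⟩, Finset.mem_univ _, ?_⟩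
  show (x - 1) + 1 = x
  omega

lemma prod_fact_eq :
    ∏ x ∈ (Mm lam).toFinset, ((Mm lam).count x)!
      = ∏ o : Option (Fin n),
          (o.elim (n + 1 - Multiset.card lam.parts)
            (fun j => lam.parts.count ((j : ℕ) + 1)))! := by
  classical
  rw [Fintype.prod_option]
  simp only [Option.elim]
  rw [Mm_toFinset, Finset.prod_insert (fun h => zero_not_mem_parts lam
    (Multiset.mem_toFinset.mp h)), Mm_count_zero]
  congr 1
  have hstep : ∏ x ∈ lam.parts.toFinset, ((Mm lam).count x)!
      = ∏ x ∈ lam.parts.toFinset, (lam.parts.count x)! := by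
    apply Finset.prod_congr rfl
    intro x hx
    rw [Mm_count_ne lam (lam.parts_pos (Multiset.mem_toFinset.mp hx)).ne']
  rw [hstep]
  have himg : ∏ j : Fin n, (lam.parts.count ((j : ℕ) + 1))!
      = ∏ x ∈ Finset.image (fun j : Fin n => (j : ℕ) + 1) Finset.univ,
          (lam.parts.count x)! := by
    rw [Finset.prod_image]
    intro x _ y _ h
    exact Fin.ext (by have h' : (x : ℕ) + 1 = y + 1 := h; omega)
  rw [himg]
  apply Finset.prod_subset (parts_toFinset_subset lam)
  intro x _ hnx
  rw [Multiset.count_eq_zero.mpr (fun hm => hnx (Multiset.mem_toFinset.mpr hm))]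
  rfl

lemma sum_f_eq :
    ∑ o : Option (Fin n),
        (o.elim (n + 1 - Multiset.card lam.parts)
          (fun j => lam.parts.count ((j : ℕ) + 1)))
      = n + 1 := by
  classical
  have hℓ := parts_card_le lam
  rw [Fintype.sum_option]
  simp only [Option.elim]
  have himg : ∑ j : Fin n, lam.parts.count ((j : ℕ) + 1)
      = ∑ x ∈ Finset.image (fun j : Fin n => (j : ℕ) + 1) Finset.univ,
          lam.parts.count x := by
    rw [Finset.sum_image]
    intro x _ y _ h
    exact Fin.ext (by have h' : (x : ℕ) + 1 = y + 1 := h; omega)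
  rw [himg, ← Finset.sum_subset (parts_toFinset_subset lam)
    (fun x _ hnx => Multiset.count_eq_zero.mpr (fun hm => hnx (Multiset.mem_toFinset.mpr hm))),
    Multiset.toFinset_sum_count_eq]
  omega

end Final

/-- for a partition `λ ⊢ n`, the number of Dyck paths of size `n` whose
multiset of East-run lengths equals the multiset of parts of `λ` is the Kreweras number
`Krew(λ) = (1/(n+1)) · multinomial(n+1; n+1-ℓ(λ), m_1(λ), ..., m_n(λ))`. -/
theorem kreweras_counts_dyck_paths (n : ℕ) (lam : Nat.Partition n) :
    (Nat.card {w : List Bool //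
        IsDyckWord n w ∧ Multiset.ofList (eRuns w) = lam.parts} : ℚ)
      = (1 / ((n : ℚ) + 1)) *
          (Nat.multinomial (Finset.univ : Finset (Option (Fin n)))
            (fun o => o.elim (n + 1 - lam.parts.card)
              (fun j => lam.parts.count ((j : ℕ) + 1))) : ℚ) := by
  classical
  have hkey : Nat.card {w : List Bool //
        IsDyckWord n w ∧ Multiset.ofList (eRuns w) = lam.parts} * (n + 1)
      = Nat.multinomial (Finset.univ : Finset (Option (Fin n)))
          (fun o => o.elim (n + 1 - lam.parts.card)
            (fun j => lam.parts.count ((j : ℕ) + 1))) := by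
    rw [card_T0_eq_T1 lam, card_T1_eq_T2 lam, ← card_S_eq lam]
    have hSA : Nat.card {a : List ℕ // a.length = n + 1 ∧
          Multiset.ofList (a.filter (fun x => x ≠ 0)) = lam.parts}
        = Nat.card {l : List ℕ // (l : Multiset ℕ) = Mm lam} :=
      Nat.card_congr (Equiv.subtypeEquivRight (mem_S_iff lam))
    rw [hSA]
    have hCA := count_anagrams (Mm lam)
    rw [Mm_card lam, prod_fact_eq lam] at hCA
    have hMS := Nat.multinomial_spec (Finset.univ : Finset (Option (Fin n)))
      (fun o => o.elim (n + 1 - lam.parts.card)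
        (fun j => lam.parts.count ((j : ℕ) + 1)))
    rw [sum_f_eq lam] at hMS
    have hQpos : 0 < ∏ o : Option (Fin n),
        (o.elim (n + 1 - lam.parts.card) (fun j => lam.parts.count ((j : ℕ) + 1)))! :=
      Finset.prod_pos (fun _ _ => Nat.factorial_pos _)
    apply Nat.eq_of_mul_eq_mul_right hQpos
    rw [hCA, mul_comm (Nat.multinomial _ _) _, hMS]
  have hcast : ((Nat.multinomial (Finset.univ : Finset (Option (Fin n)))
        (fun o => o.elim (n + 1 - lam.parts.card)
          (fun j => lam.parts.count ((j : ℕ) + 1))) : ℕ) : ℚ)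
      = (Nat.card {w : List Bool //
          IsDyckWord n w ∧ Multiset.ofList (eRuns w) = lam.parts} : ℚ) * ((n : ℚ) + 1) := by
    rw [← hkey]
    push_cast
    ring
  rw [hcast]
  have hne : ((n : ℚ) + 1) ≠ 0 := by positivity
  field_simp
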